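/- Let A_n ∈ ℝ^{d×d}, n ∈ ℕ, be invertible matrices with solution operator Φ, let s ∈ {1,…,d}, and for V ∈ 𝒢(s,d) set a_{m,n}(V) := Σ_{j=m}^{n} ∠(Φ(j−1,0)V, Φ(j,0)V). Then the sequence b_n := sup_{V∈𝒢(s,d)} sup_{k∈ℕ} a_{k+1,k+n}(V), n ≥ 1, is subadditive (b_{n+m} ≤ b_n + b_m for all n,m ≥ 1), and consequently lim_{n→∞} b_n/n exists and equals inf_{n≥1} b_n/n; in particular the limit defining the upper uniform inner angular value θ̄_{[s]} = lim_{n→∞} (1/n) sup_{V∈𝒢(s,d)} sup_{k∈ℕ} a_{k+1,k+n}(V) exists. -/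

import Mathlib

open Filter

noncomputable section

abbrev Euc (d : ℕ) := EuclideanSpace ℝ (Fin d)

/-- Angle between the lines spanned by two vectors. -/
noncomputable def vecAngle {d : ℕ} (v w : Euc d) : ℝ :=
  Real.arccos (|(inner ℝ v w : ℝ)| / (‖v‖ * ‖w‖))

/-- Largest principal angle between two subspaces of equal dimension. -/
noncomputable def subAngle {d : ℕ} (V W : Submodule ℝ (Euc d)) : ℝ :=
  Real.arccos (sInf {c : ℝ | ∃ v ∈ V, ‖v‖ = 1 ∧
    c = sSup {r : ℝ | ∃ w ∈ W, ‖w‖ = 1 ∧ r = (inner ℝ v w : ℝ)}})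

/-- Forward product `A (m+n-1) ⋯ A m`. -/
noncomputable def PhiF {d : ℕ} (A : ℕ → (Euc d →L[ℝ] Euc d)) (m : ℕ) : ℕ → (Euc d →L[ℝ] Euc d)
  | 0 => 1
  | n + 1 => A (m + n) ∘L PhiF A m n

/-- Solution operator `Φ(n,m) = A_{n-1} ⋯ A_m` for `n ≥ m`,
`Φ(n,m) = A_n⁻¹ ⋯ A_{m-1}⁻¹` for `n < m`. -/
noncomputable def Phi {d : ℕ} (A : ℕ → (Euc d →L[ℝ] Euc d)) (n m : ℕ) : Euc d →L[ℝ] Euc d :=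
  if m ≤ n then PhiF A m (n - m) else Ring.inverse (PhiF A n (m - n))

/-- `a_{m,n}(V) = Σ_{j=m}^n ∠(Φ(j-1,0)V, Φ(j,0)V)`. -/
noncomputable def angSum {d : ℕ} (A : ℕ → (Euc d →L[ℝ] Euc d)) (V : Submodule ℝ (Euc d))
    (m n : ℕ) : ℝ :=
  ∑ j ∈ Finset.Icc m n, subAngle (V.map (Phi A (j - 1) 0 : Euc d →ₗ[ℝ] Euc d)) (V.map (Phi A j 0 : Euc d →ₗ[ℝ] Euc d))

/-- `b_n = sup_{V ∈ 𝒢(s,d)} sup_{k ∈ ℕ} a_{k+1,k+n}(V)`. -/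
noncomputable def bSeq {d : ℕ} (A : ℕ → (Euc d →L[ℝ] Euc d)) (s n : ℕ) : ℝ :=
  sSup {x : ℝ | ∃ V : Submodule ℝ (Euc d), Module.finrank ℝ V = s ∧
    ∃ k : ℕ, x = angSum A V (k + 1) (k + n)}


-- Auxiliary lemmas

lemma subAngle_nonneg {d : ℕ} (V W : Submodule ℝ (Euc d)) : 0 ≤ subAngle V W :=
  Real.arccos_nonneg _

lemma subAngle_le_pi {d : ℕ} (V W : Submodule ℝ (Euc d)) : subAngle V W ≤ Real.pi :=
  Real.arccos_le_pi _

lemma angSum_nonneg {d : ℕ} (A : ℕ → (Euc d →L[ℝ] Euc d)) (V : Submodule ℝ (Euc d))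
    (m n : ℕ) : 0 ≤ angSum A V m n :=
  Finset.sum_nonneg fun _ _ => subAngle_nonneg _ _

lemma angSum_le {d : ℕ} (A : ℕ → (Euc d →L[ℝ] Euc d)) (V : Submodule ℝ (Euc d))
    (k n : ℕ) : angSum A V (k + 1) (k + n) ≤ n * Real.pi := by
  calc angSum A V (k + 1) (k + n)
      ≤ ∑ _j ∈ Finset.Icc (k + 1) (k + n), Real.pi :=
        Finset.sum_le_sum fun _ _ => subAngle_le_pi _ _
    _ = n * Real.pi := by
        rw [Finset.sum_const, Finset.Icc_add_one_left_eq_Ioc, Nat.card_Ioc]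
        simp

lemma exists_sub {d s : ℕ} (hsd : s ≤ d) :
    ∃ V : Submodule ℝ (Euc d), Module.finrank ℝ V = s := by
  classical
  obtain ⟨b⟩ : Nonempty (Module.Basis (Fin d) ℝ (Euc d)) :=
    ⟨(Pi.basisFun ℝ (Fin d)).map (WithLp.linearEquiv 2 ℝ _).symm⟩
  refine ⟨Submodule.span ℝ (Set.range (b ∘ Fin.castLE hsd)), ?_⟩
  have hli := b.linearIndependent.comp _ (Fin.castLE_injective hsd)
  rw [finrank_span_eq_card hli]
  simp

lemma bSet_nonempty {d : ℕ} (A : ℕ → (Euc d →L[ℝ] Euc d)) {s : ℕ} (hsd : s ≤ d) (n : ℕ) :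
    {x : ℝ | ∃ V : Submodule ℝ (Euc d), Module.finrank ℝ V = s ∧
      ∃ k : ℕ, x = angSum A V (k + 1) (k + n)}.Nonempty := by
  obtain ⟨V, hV⟩ := exists_sub (d := d) hsd
  exact ⟨angSum A V 1 n, V, hV, 0, by simp⟩

lemma bSet_bddAbove {d : ℕ} (A : ℕ → (Euc d →L[ℝ] Euc d)) (s n : ℕ) :
    BddAbove {x : ℝ | ∃ V : Submodule ℝ (Euc d), Module.finrank ℝ V = s ∧
      ∃ k : ℕ, x = angSum A V (k + 1) (k + n)} := by
  refine ⟨n * Real.pi, fun x hx => ?_⟩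
  obtain ⟨V, _, k, rfl⟩ := hx
  exact angSum_le A V k n

lemma bSeq_nonneg {d : ℕ} (A : ℕ → (Euc d →L[ℝ] Euc d)) {s : ℕ} (hsd : s ≤ d) (n : ℕ) :
    0 ≤ bSeq A s n := by
  obtain ⟨x, V, hV, k, hx⟩ := bSet_nonempty A hsd n
  have hx0 : (0:ℝ) ≤ x := hx ▸ angSum_nonneg A V _ _
  exact hx0.trans (le_csSup (bSet_bddAbove A s n) ⟨V, hV, k, hx⟩)

lemma bSeq_subadd {d : ℕ} (A : ℕ → (Euc d →L[ℝ] Euc d)) {s : ℕ} (hsd : s ≤ d) :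
    Subadditive (bSeq A s) := by
  intro n m
  apply csSup_le (bSet_nonempty A hsd (n + m))
  rintro x ⟨V, hV, k, rfl⟩
  have hsplit : angSum A V (k + 1) (k + (n + m)) =
      angSum A V (k + 1) (k + n) + angSum A V (k + n + 1) (k + n + m) := by
    unfold angSum
    rw [Finset.Icc_add_one_left_eq_Ioc, Finset.Icc_add_one_left_eq_Ioc, Finset.Icc_add_one_left_eq_Ioc, ← add_assoc,
      Finset.sum_Ioc_consecutive _ (Nat.le_add_right k n) (Nat.le_add_right (k + n) m)]
  rw [hsplit]
  exact add_le_add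
    (le_csSup (bSet_bddAbove A s n) ⟨V, hV, k, rfl⟩)
    (le_csSup (bSet_bddAbove A s m) ⟨V, hV, k + n, rfl⟩)

/-- The sequence `b_n = sup_V sup_k a_{k+1,k+n}(V)` is subadditive and hence
`b_n/n` converges to `inf_{n≥1} b_n/n`; in particular the limit defining the upper uniform
inner angular value `θ̄_[s]` exists. -/
theorem bSeq_subadditive_and_tendsto {d : ℕ} (A : ℕ → (Euc d →L[ℝ] Euc d))
    (hA : ∀ n, IsUnit (A n)) (s : ℕ) (hs1 : 1 ≤ s) (hsd : s ≤ d) :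
    (∀ n m : ℕ, 1 ≤ n → 1 ≤ m → bSeq A s (n + m) ≤ bSeq A s n + bSeq A s m) ∧
    Tendsto (fun n : ℕ => bSeq A s n / n) atTop
      (nhds (sInf {x : ℝ | ∃ n : ℕ, 1 ≤ n ∧ x = bSeq A s n / n})) := by
  have hsub := bSeq_subadd A hsd
  constructor
  · exact fun n m _ _ => hsub n m
  · have hset : {x : ℝ | ∃ n : ℕ, 1 ≤ n ∧ x = bSeq A s n / n} =
        (fun n : ℕ => bSeq A s n / n) '' Set.Ici 1 := by
      ext x
      simp only [Set.mem_setOf_eq, Set.mem_image, Set.mem_Ici]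
      exact ⟨fun ⟨n, h1, h2⟩ => ⟨n, h1, h2.symm⟩, fun ⟨n, h1, h2⟩ => ⟨n, h1, h2.symm⟩⟩
    rw [hset]
    have := hsub.tendsto_lim
      ⟨0, fun x ⟨n, hn⟩ => hn ▸ div_nonneg (bSeq_nonneg A hsd n) (Nat.cast_nonneg n)⟩
    rw [Subadditive.lim] at this
    exact this
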